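/- For real numbers 0 ≤ s ≤ t ≤ 1 and positive reals m, n, the integral J(s,t) = ∫_s^t (cos(m π r) - cos(m π s)) · (-n π sin(n π r)) dr satisfies |J(s,t)| ≤ C · m · (t-s) for some absolute constant C (e.g. C = 3π works). -/

import Mathlib

open Real intervalIntegral

lemma abs_cos_sub_cos_le' (a b : ℝ) : |Real.cos a - Real.cos b| ≤ |a - b| := by
  rw [Real.cos_sub_cos]
  rw [abs_mul, abs_mul]
  have h1 : |Real.sin ((a + b) / 2)| ≤ 1 := Real.abs_sin_le_one _
  have h2 : |Real.sin ((a - b) / 2)| ≤ |(a - b) / 2| := Real.abs_sin_le_abs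
  have h3 : |(-2 : ℝ)| = 2 := by norm_num
  rw [h3]
  have : |(a - b) / 2| = |a - b| / 2 := by rw [abs_div]; norm_num
  nlinarith [abs_nonneg (Real.sin ((a + b) / 2)), abs_nonneg (Real.sin ((a - b) / 2)),
    abs_nonneg (a - b)]

theorem bound_iii :
    ∃ C > 0, ∀ (s t m n : ℝ), 0 ≤ s → s ≤ t → t ≤ 1 → 0 < m → 0 < n →
      |∫ r in s..t, (Real.cos (m * π * r) - Real.cos (m * π * s)) *
          (-(n * π * Real.sin (n * π * r)))| ≤ C * m * (t - s) := by
  refine ⟨3 * π, by positivity, fun s t m n hs hst ht1 hm hn => ?_⟩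
  have hu : ∀ x ∈ Set.uIcc s t,
      HasDerivAt (fun r => Real.cos (m * π * r) - Real.cos (m * π * s))
        (-(m * π * Real.sin (m * π * x))) x := by
    intro x _
    have h := (((hasDerivAt_id x).const_mul (m * π)).cos).sub_const (Real.cos (m * π * s))
    convert h using 1
    exacts [rfl, rfl, rfl, by simp only [id]; ring]
  have hv : ∀ x ∈ Set.uIcc s t,
      HasDerivAt (fun r => Real.cos (n * π * r)) (-(n * π * Real.sin (n * π * x))) x := by
    intro x _
    have h := ((hasDerivAt_id x).const_mul (n * π)).cos
    convert h using 1
    exacts [rfl, by simp only [id]; ring]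
  have hu' : IntervalIntegrable (fun x => -(m * π * Real.sin (m * π * x)))
      MeasureTheory.volume s t := (Continuous.intervalIntegrable (by continuity) s t)
  have hv' : IntervalIntegrable (fun x => -(n * π * Real.sin (n * π * x)))
      MeasureTheory.volume s t := (Continuous.intervalIntegrable (by continuity) s t)
  have key := intervalIntegral.integral_mul_deriv_eq_deriv_mul hu hv hu' hv'
  simp only [sub_self, zero_mul, sub_zero] at key
  rw [key]
  have hts : 0 ≤ t - s := by linarith
  have hπ := Real.pi_pos
  have hbd1 : |(Real.cos (m * π * t) - Real.cos (m * π * s)) * Real.cos (n * π * t)| ≤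
      m * π * (t - s) := by
    rw [abs_mul]
    have h1 : |Real.cos (m * π * t) - Real.cos (m * π * s)| ≤ m * π * (t - s) := by
      have := abs_cos_sub_cos_le' (m * π * t) (m * π * s)
      have heq : |m * π * t - m * π * s| = m * π * (t - s) := by
        rw [show m * π * t - m * π * s = m * π * (t - s) by ring,
          abs_of_nonneg (by positivity)]
      linarith [this, heq ▸ this]
    have h2 : |Real.cos (n * π * t)| ≤ 1 := Real.abs_cos_le_one _
    calc |Real.cos (m * π * t) - Real.cos (m * π * s)| * |Real.cos (n * π * t)|
        ≤ (m * π * (t - s)) * 1 := by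
          apply mul_le_mul h1 h2 (abs_nonneg _) (by positivity)
      _ = m * π * (t - s) := mul_one _
  have hbd2 : |∫ x in s..t, -(m * π * Real.sin (m * π * x)) * Real.cos (n * π * x)| ≤
      m * π * (t - s) := by
    have hb : ∀ x ∈ Set.uIoc s t,
        ‖-(m * π * Real.sin (m * π * x)) * Real.cos (n * π * x)‖ ≤ m * π := by
      intro x _
      rw [Real.norm_eq_abs, abs_mul, abs_neg, abs_mul, abs_mul,
        abs_of_pos hm, abs_of_pos hπ]
      have h1 : |Real.sin (m * π * x)| ≤ 1 := Real.abs_sin_le_one _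
      have h2 : |Real.cos (n * π * x)| ≤ 1 := Real.abs_cos_le_one _
      nlinarith [mul_pos hm hπ, mul_le_one₀ h1 (abs_nonneg _) h2,
        mul_nonneg (abs_nonneg (Real.sin (m * π * x))) (abs_nonneg (Real.cos (n * π * x)))]
    have := intervalIntegral.norm_integral_le_of_norm_le_const hb
    rw [Real.norm_eq_abs, abs_of_nonneg hts] at this
    exact this
  calc |(Real.cos (m * π * t) - Real.cos (m * π * s)) * Real.cos (n * π * t) -
        ∫ x in s..t, -(m * π * Real.sin (m * π * x)) * Real.cos (n * π * x)|
      ≤ |(Real.cos (m * π * t) - Real.cos (m * π * s)) * Real.cos (n * π * t)| +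
        |∫ x in s..t, -(m * π * Real.sin (m * π * x)) * Real.cos (n * π * x)| := abs_sub _ _
    _ ≤ m * π * (t - s) + m * π * (t - s) := add_le_add hbd1 hbd2
    _ ≤ 3 * π * m * (t - s) := by nlinarith [mul_nonneg (mul_nonneg hm.le hπ.le) hts]
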